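/- Let d ≥ 1, K > 1, T ∈ (0,1]. Let g : ℝ^d → L(ℝ^d,ℝ^d) and f : ℝ^d → ℝ^d be bounded continuously differentiable functions with bounded derivatives, and set f̂(u) := f(u) + u. Let H : [0,T] → C_{per}([0,2π],ℝ^d) be continuous with H̄ := sup_{0≤t≤T} ‖H_t‖_∞, and let U, w, w̄ : [0,T] → C¹_{per}([0,2π],ℝ^d) be continuous with sup_{0≤t≤T} ‖U_t‖_{C¹} ≤ K, sup_{0≤t≤T} ‖w_t‖_{C¹} ≤ K, sup_{0≤t≤T} ‖w̄_t‖_{C¹} ≤ K. Set u_s := w_s + H_s + U_s, ū_s := w̄_s + H_s + U_s, and (M w)(t,x) := ∫₀^t ( S_{t−s}( g(u_s)(∂_x w_s + ∂_x U_s) + f̂(u_s) ) )(x) ds, where S is the periodic heat semigroup. Then there exists a constant C, depending only on K, d, ‖g‖_∞, ‖Dg‖_∞, ‖Df‖_∞ and the heat-semigroup constant C₀ (and not on T, H, U, w, w̄), such that sup_{0≤t≤T} ‖(M w)(t,·) − (M w̄)(t,·)‖_{C¹} ≤ C (1 + H̄) T^{1/2} · sup_{0≤s≤T} ‖w_s −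 w̄_s‖_{C¹}. -/

import Mathlib

open MeasureTheory

/-- The `2π`-periodic heat kernel `p_t(x) = (2πt)^{-1/2} Σ_{n∈ℤ} exp(-(x-2πn)²/(2t))`. -/
noncomputable def heatKernel (t x : ℝ) : ℝ :=
  (1 / Real.sqrt (2 * Real.pi * t)) *
    ∑' n : ℤ, Real.exp (-(x - 2 * Real.pi * n) ^ 2 / (2 * t))


noncomputable def heatKernelDeriv (t x : ℝ) : ℝ :=
  (1 / Real.sqrt (2 * Real.pi * t)) *
    ∑' n : ℤ, (-(x - 2 * Real.pi * n) / t) * Real.exp (-(x - 2 * Real.pi * n) ^ 2 / (2 * t))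
/-- `|a| e^{-a²/(2r)} ≤ √(8r) e^{-a²/(4r)}`. -/
lemma abs_mul_exp_le {r : ℝ} (hr : 0 < r) (a : ℝ) :
    |a| * Real.exp (-a ^ 2 / (2 * r)) ≤ Real.sqrt (8 * r) * Real.exp (-a ^ 2 / (4 * r)) := by
  have h0 : a ^ 2 / (8 * r) ≤ Real.exp (a ^ 2 / (8 * r)) := by
    have := Real.add_one_le_exp (a ^ 2 / (8 * r))
    linarith
  have h1 : |a| ≤ Real.sqrt (8 * r) * Real.exp (a ^ 2 / (16 * r)) := by
    have h2 : a ^ 2 ≤ (8 * r) * Real.exp (a ^ 2 / (8 * r)) := by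
      rw [← div_le_iff₀' (by positivity)]; exact h0
    calc |a| = Real.sqrt (a ^ 2) := (Real.sqrt_sq_eq_abs a).symm
      _ ≤ Real.sqrt ((8 * r) * Real.exp (a ^ 2 / (8 * r))) := Real.sqrt_le_sqrt h2
      _ = Real.sqrt (8 * r) * Real.sqrt (Real.exp (a ^ 2 / (8 * r))) :=
          Real.sqrt_mul (by positivity) _
      _ = Real.sqrt (8 * r) * Real.exp (a ^ 2 / (16 * r)) := by
          rw [← Real.exp_half]; ring_nf
  calc |a| * Real.exp (-a ^ 2 / (2 * r))
      ≤ (Real.sqrt (8 * r) * Real.exp (a ^ 2 / (16 * r))) * Real.exp (-a ^ 2 / (2 * r)) := by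
        apply mul_le_mul_of_nonneg_right h1 (Real.exp_nonneg _)
    _ = Real.sqrt (8 * r) * Real.exp (a ^ 2 / (16 * r) + -a ^ 2 / (2 * r)) := by
        rw [mul_assoc, Real.exp_add]
    _ ≤ Real.sqrt (8 * r) * Real.exp (-a ^ 2 / (4 * r)) := by
        apply mul_le_mul_of_nonneg_left _ (Real.sqrt_nonneg _)
        apply Real.exp_le_exp.2
        have hq : 0 ≤ a ^ 2 / r := div_nonneg (sq_nonneg a) hr.le
        have e1 : a ^ 2 / (16 * r) = (a ^ 2 / r) / 16 := by ring
        have e2 : -a ^ 2 / (2 * r) = -((a ^ 2 / r) / 2) := by ring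
        have e3 : -a ^ 2 / (4 * r) = -((a ^ 2 / r) / 4) := by ring
        rw [e1, e2, e3]; linarith

lemma sq_max_le {R z : ℝ} (n : ℤ) (hz : |z| ≤ R) :
    (max (2 * Real.pi * |(n : ℝ)| - R) 0) ^ 2 ≤ (z - 2 * Real.pi * n) ^ 2 := by
  have h1 : max (2 * Real.pi * |(n : ℝ)| - R) 0 ≤ |z - 2 * Real.pi * n| := by
    refine max_le ?_ (abs_nonneg _)
    have h2 : |(2 * Real.pi * n : ℝ)| - |z| ≤ |z - 2 * Real.pi * n| := by
      rw [abs_sub_comm]; exact abs_sub_abs_le_abs_sub _ _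
    have h3 : |(2 * Real.pi * n : ℝ)| = 2 * Real.pi * |(n : ℝ)| := by
      rw [abs_mul, abs_of_pos (by positivity : (0:ℝ) < 2 * Real.pi)]
    linarith
  calc (max (2 * Real.pi * |(n : ℝ)| - R) 0) ^ 2 ≤ |z - 2 * Real.pi * n| ^ 2 := by
        apply pow_le_pow_left₀ (le_max_right _ _) h1
    _ = (z - 2 * Real.pi * n) ^ 2 := sq_abs _
noncomputable def bdSeq (r R : ℝ) (n : ℤ) : ℝ :=
  Real.exp (-(max (2 * Real.pi * |(n : ℝ)| - R) 0) ^ 2 / (4 * r))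

lemma summable_exp_neg_abs_int : Summable (fun n : ℤ => Real.exp (-|(n : ℝ)|)) := by
  have hnat : Summable (fun n : ℕ => Real.exp (-(n : ℝ))) := by
    have : (fun n : ℕ => Real.exp (-(n : ℝ))) = fun n : ℕ => (Real.exp (-1)) ^ n := by
      funext n; rw [← Real.exp_nat_mul]; ring_nf
    rw [this]
    exact summable_geometric_of_lt_one (Real.exp_nonneg _) (Real.exp_lt_one_iff.2 (by norm_num))
  apply Summable.of_nat_of_neg
  · simpa using hnat
  · simpa using hnat

lemma summable_bdSeq {r : ℝ} (R : ℝ) (hr : 0 < r) : Summable (bdSeq r R) := by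
  apply Summable.of_norm_bounded_eventually (g := fun n : ℤ => Real.exp (-|(n : ℝ)|))
    summable_exp_neg_abs_int
  have hfin : {n : ℤ | ¬ ‖bdSeq r R n‖ ≤ Real.exp (-|(n : ℝ)|)} ⊆
      {n : ℤ | |(n : ℝ)| ≤ max R (4 * r) + 1} := by
    intro n hn
    by_contra hcon
    simp only [Set.mem_setOf_eq, not_le] at hcon
    apply hn
    have hM : max R (4 * r) + 1 < |(n : ℝ)| := hcon
    have hRn : R ≤ |(n : ℝ)| := by
      have := le_max_left R (4 * r); linarith
    have hrn : 4 * r ≤ |(n : ℝ)| := by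
      have := le_max_right R (4 * r); linarith
    have hpi : (3 : ℝ) ≤ Real.pi := Real.pi_gt_three.le
    have h5 : 5 * |(n : ℝ)| ≤ 2 * Real.pi * |(n : ℝ)| - R := by
      nlinarith [abs_nonneg (n : ℝ)]
    have hmax : max (2 * Real.pi * |(n : ℝ)| - R) 0 = 2 * Real.pi * |(n : ℝ)| - R :=
      max_eq_left (by nlinarith [abs_nonneg (n : ℝ)])
    have hkey : |(n : ℝ)| ≤ (max (2 * Real.pi * |(n : ℝ)| - R) 0) ^ 2 / (4 * r) := by
      rw [hmax, le_div_iff₀ (by positivity)]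
      nlinarith [abs_nonneg (n : ℝ)]
    have : bdSeq r R n ≤ Real.exp (-|(n : ℝ)|) := by
      unfold bdSeq
      apply Real.exp_le_exp.2
      rw [neg_div]
      linarith
    rw [Real.norm_eq_abs, abs_of_pos (by unfold bdSeq; positivity)]
    exact this
  rw [Filter.eventually_cofinite]
  refine Set.Finite.subset ?_ hfin
  exact Set.Finite.subset (Set.finite_Icc (-(⌈max R (4 * r) + 1⌉)) ⌈max R (4 * r) + 1⌉) (by
      intro n hn
      simp only [Set.mem_setOf_eq] at hn
      have : |n| ≤ ⌈max R (4 * r) + 1⌉ := by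
        have h1 : ((|n| : ℤ) : ℝ) ≤ (⌈max R (4 * r) + 1⌉ : ℝ) := by
          push_cast
          calc |(n : ℝ)| ≤ max R (4 * r) + 1 := hn
            _ ≤ (⌈max R (4 * r) + 1⌉ : ℝ) := Int.le_ceil _
        exact_mod_cast h1
      constructor <;> [linarith [neg_abs_le n, abs_le.1 this]; linarith [le_abs_self n, abs_le.1 this]]
      )
lemma term_bound {r : ℝ} (hr : 0 < r) {R z : ℝ} (n : ℤ) (hz : |z| ≤ R) :
    ‖(-(z - 2 * Real.pi * n) / r) * Real.exp (-(z - 2 * Real.pi * n) ^ 2 / (2 * r))‖ ≤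
      (Real.sqrt (8 * r) / r) * bdSeq r R n := by
  set a := z - 2 * Real.pi * n with ha
  rw [Real.norm_eq_abs, abs_mul, abs_div, abs_neg, abs_of_pos (Real.exp_pos _),
    abs_of_pos hr]
  have h1 : |a| / r * Real.exp (-a ^ 2 / (2 * r)) =
      (|a| * Real.exp (-a ^ 2 / (2 * r))) / r := by ring
  rw [h1]
  have h2 : |a| * Real.exp (-a ^ 2 / (2 * r)) ≤ Real.sqrt (8 * r) * Real.exp (-a ^ 2 / (4 * r)) :=
    abs_mul_exp_le hr a
  have h3 : Real.exp (-a ^ 2 / (4 * r)) ≤ bdSeq r R n := by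
    unfold bdSeq
    apply Real.exp_le_exp.2
    have := sq_max_le (R := R) (z := z) n hz
    rw [neg_div, neg_div, neg_le_neg_iff]
    gcongr
  calc (|a| * Real.exp (-a ^ 2 / (2 * r))) / r
      ≤ (Real.sqrt (8 * r) * Real.exp (-a ^ 2 / (4 * r))) / r := by gcongr
    _ ≤ (Real.sqrt (8 * r) * bdSeq r R n) / r := by gcongr
    _ = (Real.sqrt (8 * r) / r) * bdSeq r R n := by ring

lemma term_hasDerivAt {r : ℝ} (hr : 0 < r) (c z : ℝ) :
    HasDerivAt (fun z => Real.exp (-(z - c) ^ 2 / (2 * r)))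
      ((-(z - c) / r) * Real.exp (-(z - c) ^ 2 / (2 * r))) z := by
  have h1 : HasDerivAt (fun z : ℝ => z - c) 1 z := (hasDerivAt_id z).sub_const c
  have h2 : HasDerivAt (fun z : ℝ => -(z - c) ^ 2 / (2 * r)) (-(z - c) / r) z := by
    have h3 := (h1.pow 2).neg.div_const (2 * r)
    refine h3.congr_deriv ?_
    norm_num <;> field_simp <;> ring
  simpa [mul_comm] using h2.exp

lemma summable_term {r : ℝ} (hr : 0 < r) {R z : ℝ} (hz : |z| ≤ R) :
    Summable (fun n : ℤ => Real.exp (-(z - 2 * Real.pi * n) ^ 2 / (2 * r))) := by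
  apply Summable.of_norm_bounded (g := bdSeq r R) (summable_bdSeq R hr)
  intro n
  rw [Real.norm_eq_abs, abs_of_pos (Real.exp_pos _)]
  unfold bdSeq
  apply Real.exp_le_exp.2
  have h := sq_max_le (R := R) (z := z) n hz
  have hm : (0:ℝ) ≤ (max (2 * Real.pi * |(n : ℝ)| - R) 0) ^ 2 := sq_nonneg _
  rw [neg_div, neg_div, neg_le_neg_iff]
  have h1 : (max (2 * Real.pi * |(n : ℝ)| - R) 0) ^ 2 / (4 * r)
      ≤ (z - 2 * Real.pi * n) ^ 2 / (4 * r) := by gcongr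
  have h2 : (z - 2 * Real.pi * n) ^ 2 / (4 * r)
      ≤ (z - 2 * Real.pi * n) ^ 2 / (2 * r) := by
    apply div_le_div_of_nonneg_left (sq_nonneg _) (by positivity) (by linarith)
  linarith
lemma heatKernel_hasDerivAt {r : ℝ} (hr : 0 < r) (x : ℝ) :
    HasDerivAt (heatKernel r) (heatKernelDeriv r x) x := by
  set R := |x| + 1 with hR
  have hx : x ∈ Set.Ioo (-R) R := by
    constructor <;> [linarith [neg_abs_le x]; linarith [le_abs_self x]]
  have key : HasDerivAt (fun z => ∑' n : ℤ, Real.exp (-(z - 2 * Real.pi * n) ^ 2 / (2 * r)))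
      (∑' n : ℤ, (-(x - 2 * Real.pi * n) / r) * Real.exp (-(x - 2 * Real.pi * n) ^ 2 / (2 * r)))
      x := by
    apply hasDerivAt_tsum_of_isPreconnected
      ((summable_bdSeq R hr).mul_left (Real.sqrt (8 * r) / r))
      isOpen_Ioo (convex_Ioo (-R) R).isPreconnected
      (fun n y _ => term_hasDerivAt hr (2 * Real.pi * n) y)
      (fun n y hy => term_bound hr n (by
        rw [Set.mem_Ioo] at hy; rw [abs_le]; constructor <;> linarith))
      hx
      (summable_term hr (le_of_eq rfl |>.trans (by simp [hR] : |x| ≤ R)))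
      hx
  have : HasDerivAt (fun z => (1 / Real.sqrt (2 * Real.pi * r)) *
      ∑' n : ℤ, Real.exp (-(z - 2 * Real.pi * n) ^ 2 / (2 * r)))
      ((1 / Real.sqrt (2 * Real.pi * r)) *
      ∑' n : ℤ, (-(x - 2 * Real.pi * n) / r) * Real.exp (-(x - 2 * Real.pi * n) ^ 2 / (2 * r)))
      x := key.const_mul _
  exact this

lemma heatKernel_continuous {r : ℝ} (hr : 0 < r) : Continuous (heatKernel r) :=
  continuous_iff_continuousAt.2 fun x => (heatKernel_hasDerivAt hr x).continuousAt

lemma heatKernelDeriv_continuous {r : ℝ} (hr : 0 < r) : Continuous (heatKernelDeriv r) := by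
  apply continuous_iff_continuousAt.2
  intro x
  set R := |x| + 1 with hR
  have hx : x ∈ Set.Ioo (-R) R := by
    constructor <;> [linarith [neg_abs_le x]; linarith [le_abs_self x]]
  have hcont : ContinuousOn (fun z => ∑' n : ℤ,
      (-(z - 2 * Real.pi * n) / r) * Real.exp (-(z - 2 * Real.pi * n) ^ 2 / (2 * r)))
      (Set.Ioo (-R) R) := by
    apply (tendstoUniformlyOn_tsum
      ((summable_bdSeq R hr).mul_left (Real.sqrt (8 * r) / r))
      (fun n z hz => term_bound hr n (by
        rw [Set.mem_Ioo] at hz; rw [abs_le]; constructor <;> linarith))).continuousOn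
    refine Filter.Frequently.of_forall fun t => ?_
    apply continuousOn_finset_sum
    intro n _
    apply Continuous.continuousOn
    have : Continuous fun z : ℝ => -(z - 2 * Real.pi * n) / r :=
      ((continuous_id.sub continuous_const).neg).div_const r
    exact this.mul ((((continuous_id.sub continuous_const).pow 2).neg.div_const _).rexp)
  have : ContinuousAt (fun z => ∑' n : ℤ,
      (-(z - 2 * Real.pi * n) / r) * Real.exp (-(z - 2 * Real.pi * n) ^ 2 / (2 * r))) x :=
    hcont.continuousAt (Ioo_mem_nhds hx.1 hx.2)
  exact (continuousAt_const.mul this : ContinuousAt _ x)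
lemma tsum_nonneg_eq_toReal {f : ℤ → ℝ} (hf : ∀ i, 0 ≤ f i) :
    ∑' i, f i = (∑' i, ENNReal.ofReal (f i)).toReal := by
  by_cases h : Summable f
  · rw [← ENNReal.ofReal_tsum_of_nonneg hf h, ENNReal.toReal_ofReal (tsum_nonneg hf)]
  · rw [tsum_eq_zero_of_not_summable h]
    have htop : ∑' i, ENNReal.ofReal (f i) = ⊤ := by
      by_contra htop
      have h2 := ENNReal.summable_toReal htop
      apply h
      apply h2.congr
      intro i
      rw [ENNReal.toReal_ofReal (hf i)]
    rw [htop]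
    simp

lemma measurable_heatKernel : Measurable fun p : ℝ × ℝ => heatKernel p.1 p.2 := by
  have heq : ∀ p : ℝ × ℝ, heatKernel p.1 p.2 = (1 / Real.sqrt (2 * Real.pi * p.1)) *
      (∑' n : ℤ, ENNReal.ofReal (Real.exp (-(p.2 - 2 * Real.pi * n) ^ 2 / (2 * p.1)))).toReal := by
    intro p
    rw [heatKernel, tsum_nonneg_eq_toReal (fun i => (Real.exp_pos _).le)]
  simp_rw [heq]
  apply Measurable.mul
  · apply Measurable.div measurable_const
    exact (Real.continuous_sqrt.measurable).comp (measurable_const.mul measurable_fst)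
  · apply Measurable.ennreal_toReal
    apply Measurable.ennreal_tsum
    intro n
    apply Measurable.ennreal_ofReal
    apply Real.measurable_exp.comp
    apply Measurable.div
    · exact (((measurable_snd.sub measurable_const).pow measurable_const).neg)
    · exact measurable_const.mul measurable_fst

/-- The periodic heat semigroup `(S_t v)(x) = ∫₀^{2π} p_t(x-y) v(y) dy`. -/
noncomputable def heatSemigroup {d : ℕ} (t : ℝ) (v : ℝ → EuclideanSpace ℝ (Fin d)) (x : ℝ) :
    EuclideanSpace ℝ (Fin d) :=
  ∫ y in (0 : ℝ)..(2 * Real.pi), heatKernel t (x - y) • v y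


section Semigroup
variable {d : ℕ}

lemma heatSemigroup_hasDerivAt {r : ℝ} (hr : 0 < r) (v : ℝ → EuclideanSpace ℝ (Fin d))
    (hv : Continuous v) (x : ℝ) :
    HasDerivAt (fun z => heatSemigroup r v z)
      (∫ y in (0 : ℝ)..(2 * Real.pi), heatKernelDeriv r (x - y) • v y) x := by
  set R := |x| + 1 + 2 * Real.pi with hR
  obtain ⟨M, hM⟩ : ∃ M, ∀ w ∈ Set.Icc (-R) R, ‖heatKernelDeriv r w‖ ≤ M :=
    isCompact_Icc.exists_bound_of_continuousOn (heatKernelDeriv_continuous hr).continuousOn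
  obtain ⟨B, hB⟩ : ∃ B, ∀ y ∈ Set.Icc (0:ℝ) (2 * Real.pi), ‖v y‖ ≤ B :=
    isCompact_Icc.exists_bound_of_continuousOn hv.continuousOn
  have hpi : (0:ℝ) < Real.pi := Real.pi_pos
  have hM0 : 0 ≤ M := le_trans (norm_nonneg _) (hM 0 (by
    constructor <;> simp [hR] <;> [nlinarith [abs_nonneg x]; nlinarith [abs_nonneg x]]))
  have hB0 : 0 ≤ B := le_trans (norm_nonneg _) (hB 0 (by constructor <;> [rfl; positivity]))
  have key := intervalIntegral.hasDerivAt_integral_of_dominated_loc_of_deriv_le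
    (F := fun z y => heatKernel r (z - y) • v y)
    (F' := fun z y => heatKernelDeriv r (z - y) • v y)
    (a := 0) (b := 2 * Real.pi) (μ := volume) (x₀ := x)
    (bound := fun _ => M * B) (s := Metric.ball x 1) (Metric.ball_mem_nhds x one_pos)
    ?_ ?_ ?_ ?_ ?_ ?_
  · exact key.2
  · filter_upwards with z
    exact (((heatKernel_continuous hr).comp (continuous_const.sub continuous_id)).smul
      hv).aestronglyMeasurable
  · exact (((heatKernel_continuous hr).comp (continuous_const.sub continuous_id)).smul
      hv).intervalIntegrable _ _
  · exact (((heatKernelDeriv_continuous hr).comp (continuous_const.sub continuous_id)).smul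
      hv).aestronglyMeasurable
  · filter_upwards with y hy z hz
    have hy' : y ∈ Set.Icc (0:ℝ) (2 * Real.pi) := by
      rw [Set.uIoc_of_le (by positivity)] at hy
      exact ⟨hy.1.le, hy.2⟩
    have hz' : |z - y| ≤ R := by
      rw [Metric.mem_ball, Real.dist_eq] at hz
      have h1 : |z - y| ≤ |z - x| + |x - y| := abs_sub_le z x y
      have h2 : |x - y| ≤ |x| + |y| := abs_sub _ _
      have h3 : |y| ≤ 2 * Real.pi := by
        rw [abs_of_nonneg hy'.1]; exact hy'.2
      have h4 : |z - x| < 1 := hz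
      rw [hR]
      linarith
    rw [norm_smul]
    apply mul_le_mul (hM _ (abs_le.1 hz')) (hB y hy') (norm_nonneg _) hM0
  · exact intervalIntegrable_const
  · filter_upwards with y hy z hz
    have h := (heatKernel_hasDerivAt hr (z - y)).comp z ((hasDerivAt_id z).sub_const y)
    simpa using h.smul_const (v y)

lemma heatSemigroup_sub {r : ℝ} (hr : 0 < r) (v v' : ℝ → EuclideanSpace ℝ (Fin d))
    (hv : Continuous v) (hv' : Continuous v') (x : ℝ) :
    heatSemigroup r v x - heatSemigroup r v' x
      = heatSemigroup r (fun y => v y - v' y) x := by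
  unfold heatSemigroup
  have hk : Continuous fun y : ℝ => heatKernel r (x - y) :=
    (heatKernel_continuous hr).comp (continuous_const.sub continuous_id)
  rw [← intervalIntegral.integral_sub (f := fun y => heatKernel r (x - y) • v y)
    (g := fun y => heatKernel r (x - y) • v' y)
    ((hk.smul hv).intervalIntegrable _ _) ((hk.smul hv').intervalIntegrable _ _)]
  congr 1
  funext y
  rw [smul_sub]

lemma heatSemigroup_measurable (t x : ℝ) (V : ℝ → ℝ → EuclideanSpace ℝ (Fin d))
    (hV : Continuous fun p : ℝ × ℝ => V p.1 p.2) :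
    StronglyMeasurable (fun s => heatSemigroup (t - s) (V s) x) := by
  have heq : ∀ s, heatSemigroup (t - s) (V s) x =
      ∫ y, heatKernel (t - s) (x - y) • V s y
        ∂(volume.restrict (Set.Ioc (0:ℝ) (2 * Real.pi))) := by
    intro s
    rw [heatSemigroup, intervalIntegral.integral_of_le (by positivity)]
  simp_rw [heq]
  apply MeasureTheory.StronglyMeasurable.integral_prod_right'
    (f := fun p : ℝ × ℝ => heatKernel (t - p.1) (x - p.2) • V p.1 p.2)
  refine StronglyMeasurable.smul (f := fun p : ℝ × ℝ => heatKernel (t - p.1) (x - p.2))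
    (g := fun p : ℝ × ℝ => V p.1 p.2) ?_ ?_
  · exact (measurable_heatKernel.comp
      (((measurable_const.sub measurable_fst)).prodMk
        (measurable_const.sub measurable_snd))).stronglyMeasurable
  · exact hV.stronglyMeasurable

end Semigroup

/-- The drift part of the fixed-point map:
`(M w)(t,x) = ∫₀^t (S_{t-s}( g(u_s)(∂ₓw_s + ∂ₓU_s) + f(u_s) + u_s ))(x) ds`
with `u_s = w_s + H_s + U_s`. -/
noncomputable def driftMap {d : ℕ}
    (g : EuclideanSpace ℝ (Fin d) → (EuclideanSpace ℝ (Fin d) →L[ℝ] EuclideanSpace ℝ (Fin d)))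
    (f : EuclideanSpace ℝ (Fin d) → EuclideanSpace ℝ (Fin d))
    (H U w : ℝ → ℝ → EuclideanSpace ℝ (Fin d)) (t x : ℝ) : EuclideanSpace ℝ (Fin d) :=
  ∫ s in (0 : ℝ)..t, heatSemigroup (t - s)
    (fun y => g (w s y + H s y + U s y) (deriv (w s) y + deriv (U s) y)
      + (f (w s y + H s y + U s y) + (w s y + H s y + U s y))) x

set_option maxHeartbeats 1000000 in
/-- Contraction estimate for the drift part of the fixed-point map:
there is a constant `C` depending only on `K`, `d`, `‖g‖_∞`, `‖Dg‖_∞`, `‖Df‖_∞` and the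
heat-semigroup constant `C₀` (and not on `T`, `H`, `U`, `w`, `w̄`) such that
`sup_{0≤t≤T} ‖(M w)(t,·) - (M w̄)(t,·)‖_{C¹} ≤ C (1+H̄) T^{1/2} sup_{0≤s≤T} ‖w_s - w̄_s‖_{C¹}`. -/
theorem driftMap_contraction
    (d : ℕ) (hd : 1 ≤ d) (K : ℝ) (hK : 1 < K)
    (Cg Cg' Cf' : ℝ)
    (C₀ : ℝ)
    (hC₀ : ∀ r ∈ Set.Ioc (0 : ℝ) 1, ∀ v : ℝ → EuclideanSpace ℝ (Fin d),
      Continuous v → (∀ z, v (z + 2 * Real.pi) = v z) → ∀ B : ℝ, (∀ z, ‖v z‖ ≤ B) →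
      ∀ x y, ‖heatSemigroup r v x‖ + ‖deriv (heatSemigroup r v) y‖
        ≤ C₀ * r ^ (-(1 : ℝ) / 2) * B) :
    ∃ C : ℝ,
      ∀ (g : EuclideanSpace ℝ (Fin d) →
             (EuclideanSpace ℝ (Fin d) →L[ℝ] EuclideanSpace ℝ (Fin d)))
        (f : EuclideanSpace ℝ (Fin d) → EuclideanSpace ℝ (Fin d)),
      ContDiff ℝ 1 g → ContDiff ℝ 1 f →
      (∀ v, ‖g v‖ ≤ Cg) → (∀ v, ‖fderiv ℝ g v‖ ≤ Cg') → (∀ v, ‖fderiv ℝ f v‖ ≤ Cf') →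
      (∃ Cf : ℝ, ∀ v, ‖f v‖ ≤ Cf) →
      ∀ (T : ℝ), 0 < T → T ≤ 1 →
      ∀ (H U w w' : ℝ → ℝ → EuclideanSpace ℝ (Fin d)),
      -- `H : [0,T] → C_per` continuous, with sup norm bounded by `H̄`
      (Continuous fun p : ℝ × ℝ => H p.1 p.2) →
      (∀ t x, H t (x + 2 * Real.pi) = H t x) →
      ∀ (Hbar : ℝ), (∀ t ∈ Set.Icc (0 : ℝ) T, ∀ x, ‖H t x‖ ≤ Hbar) →
      -- `U : [0,T] → C¹_per` continuous with `sup_t ‖U_t‖_{C¹} ≤ K`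
      (Continuous fun p : ℝ × ℝ => U p.1 p.2) →
      (Continuous fun p : ℝ × ℝ => deriv (U p.1) p.2) →
      (∀ t, ContDiff ℝ 1 (U t)) →
      (∀ t x, U t (x + 2 * Real.pi) = U t x) →
      (∀ t ∈ Set.Icc (0 : ℝ) T, ∀ x y, ‖U t x‖ + ‖deriv (U t) y‖ ≤ K) →
      -- `w : [0,T] → C¹_per` continuous with `sup_t ‖w_t‖_{C¹} ≤ K`
      (Continuous fun p : ℝ × ℝ => w p.1 p.2) →
      (Continuous fun p : ℝ × ℝ => deriv (w p.1) p.2) →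
      (∀ t, ContDiff ℝ 1 (w t)) →
      (∀ t x, w t (x + 2 * Real.pi) = w t x) →
      (∀ t ∈ Set.Icc (0 : ℝ) T, ∀ x y, ‖w t x‖ + ‖deriv (w t) y‖ ≤ K) →
      -- `w̄ : [0,T] → C¹_per` continuous with `sup_t ‖w̄_t‖_{C¹} ≤ K`
      (Continuous fun p : ℝ × ℝ => w' p.1 p.2) →
      (Continuous fun p : ℝ × ℝ => deriv (w' p.1) p.2) →
      (∀ t, ContDiff ℝ 1 (w' t)) →
      (∀ t x, w' t (x + 2 * Real.pi) = w' t x) →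
      (∀ t ∈ Set.Icc (0 : ℝ) T, ∀ x y, ‖w' t x‖ + ‖deriv (w' t) y‖ ≤ K) →
      -- `D` : a bound for `sup_{0≤s≤T} ‖w_s - w̄_s‖_{C¹}`
      ∀ (D : ℝ),
      (∀ s ∈ Set.Icc (0 : ℝ) T, ∀ x y,
        ‖w s x - w' s x‖ + ‖deriv (w s) y - deriv (w' s) y‖ ≤ D) →
      ∀ t ∈ Set.Icc (0 : ℝ) T, ∀ x y,
        ‖driftMap g f H U w t x - driftMap g f H U w' t x‖ +
          ‖deriv (fun z => driftMap g f H U w t z - driftMap g f H U w' t z) y‖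
          ≤ C * (1 + Hbar) * Real.sqrt T * D := by
  classical
  -- nonnegativity of C₀
  have hC₀0 : 0 ≤ C₀ := by
    have h := hC₀ 1 ⟨one_pos, le_rfl⟩ (fun _ => 0) continuous_const (fun z => rfl) 1
      (fun z => by simp) 0 0
    have hzero : heatSemigroup (d := d) 1 (fun _ => 0) = fun _ => (0 : EuclideanSpace ℝ (Fin d)) := by
      funext z; unfold heatSemigroup; simp
    rw [hzero] at h
    simpa using h
  set C₁ : ℝ := 2 * K * Cg' + Cg + Cf' + 1 with hC₁def
  refine ⟨4 * C₀ * C₁, ?_⟩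
  intro g f hgc hfc hCg hCg' hCf' hCfe T hT0 hT1 H U w w' hHc hHper Hbar hHbar
    hUc hUc' hUcd hUper hUK hwc hwc' hwcd hwper hwK hw'c hw'c' hw'cd hw'per hw'K D hD t ht x y
  obtain ⟨Cf, hCf⟩ := hCfe
  have hK0 : (0:ℝ) < K := lt_trans one_pos hK
  have hCg0 : 0 ≤ Cg := (norm_nonneg _).trans (hCg 0)
  have hCg'0 : 0 ≤ Cg' := le_trans (by positivity) (hCg' 0)
  have hCf'0 : 0 ≤ Cf' := (norm_nonneg _).trans (hCf' 0)
  have hCf0 : 0 ≤ Cf := (norm_nonneg _).trans (hCf 0)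
  have hHbar0 : 0 ≤ Hbar := (norm_nonneg _).trans (hHbar 0 ⟨le_rfl, hT0.le⟩ 0)
  have hD0 : 0 ≤ D :=
    (add_nonneg (norm_nonneg _) (norm_nonneg _)).trans (hD 0 ⟨le_rfl, hT0.le⟩ 0 0)
  have hC₁0 : 0 ≤ C₁ := by rw [hC₁def]; nlinarith
  -- the two integrand families
  set Vw : ℝ → ℝ → EuclideanSpace ℝ (Fin d) := fun s yy =>
    g (w s yy + H s yy + U s yy) (deriv (w s) yy + deriv (U s) yy)
      + (f (w s yy + H s yy + U s yy) + (w s yy + H s yy + U s yy)) with hVwdef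
  set Vw' : ℝ → ℝ → EuclideanSpace ℝ (Fin d) := fun s yy =>
    g (w' s yy + H s yy + U s yy) (deriv (w' s) yy + deriv (U s) yy)
      + (f (w' s yy + H s yy + U s yy) + (w' s yy + H s yy + U s yy)) with hVw'def
  have hMw : ∀ z, driftMap g f H U w t z
      = ∫ s in (0:ℝ)..t, heatSemigroup (t - s) (Vw s) z := fun z => rfl
  have hMw' : ∀ z, driftMap g f H U w' t z
      = ∫ s in (0:ℝ)..t, heatSemigroup (t - s) (Vw' s) z := fun z => rfl

  -- joint continuity
  have hgcont : Continuous g := hgc.continuous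
  have hfcont : Continuous f := hfc.continuous
  have huwc : Continuous fun p : ℝ × ℝ => w p.1 p.2 + H p.1 p.2 + U p.1 p.2 :=
    (hwc.add hHc).add hUc
  have huw'c : Continuous fun p : ℝ × ℝ => w' p.1 p.2 + H p.1 p.2 + U p.1 p.2 :=
    (hw'c.add hHc).add hUc
  have hbwc : Continuous fun p : ℝ × ℝ => deriv (w p.1) p.2 + deriv (U p.1) p.2 :=
    hwc'.add hUc'
  have hbw'c : Continuous fun p : ℝ × ℝ => deriv (w' p.1) p.2 + deriv (U p.1) p.2 :=
    hw'c'.add hUc'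
  have hVwc : Continuous fun p : ℝ × ℝ => Vw p.1 p.2 := by
    rw [hVwdef]
    exact ((hgcont.comp huwc).clm_apply hbwc).add ((hfcont.comp huwc).add huwc)
  have hVw'c : Continuous fun p : ℝ × ℝ => Vw' p.1 p.2 := by
    rw [hVw'def]
    exact ((hgcont.comp huw'c).clm_apply hbw'c).add ((hfcont.comp huw'c).add huw'c)
  have hVws : ∀ s, Continuous (Vw s) := fun s => by
    have : Continuous fun yy => Vw s yy := hVwc.comp (Continuous.prodMk_right s)
    exact this
  have hVw's : ∀ s, Continuous (Vw' s) := fun s => by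
    have : Continuous fun yy => Vw' s yy := hVw'c.comp (Continuous.prodMk_right s)
    exact this
  have hδc : Continuous fun p : ℝ × ℝ => Vw p.1 p.2 - Vw' p.1 p.2 := hVwc.sub hVw'c
  have hδs : ∀ s, Continuous (fun yy => Vw s yy - Vw' s yy) := fun s =>
    (hVws s).sub (hVw's s)
  -- periodicity
  have hper_deriv : ∀ (φ : ℝ → ℝ → EuclideanSpace ℝ (Fin d)),
      (∀ s yy, φ s (yy + 2 * Real.pi) = φ s yy) →
      ∀ s yy, deriv (φ s) (yy + 2 * Real.pi) = deriv (φ s) yy := by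
    intro φ hφ s yy
    have hfun : (fun z => φ s (z + 2 * Real.pi)) = φ s := funext (fun z => hφ s z)
    calc deriv (φ s) (yy + 2 * Real.pi)
        = deriv (fun z => φ s (z + 2 * Real.pi)) yy := (deriv_comp_add_const (φ s) (2 * Real.pi) yy).symm
      _ = deriv (φ s) yy := by rw [hfun]
  have hwdper := hper_deriv w hwper
  have hw'dper := hper_deriv w' hw'per
  have hUdper := hper_deriv U hUper
  have hVwper : ∀ s yy, Vw s (yy + 2 * Real.pi) = Vw s yy := by
    intro s yy
    simp only [hVwdef, hwper, hHper, hUper, hwdper, hUdper]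
  have hVw'per : ∀ s yy, Vw' s (yy + 2 * Real.pi) = Vw' s yy := by
    intro s yy
    simp only [hVw'def, hw'per, hHper, hUper, hw'dper, hUdper]
  -- norm bounds
  have hwB : ∀ s ∈ Set.Icc (0:ℝ) T, ∀ yy, ‖w s yy‖ ≤ K ∧ ‖deriv (w s) yy‖ ≤ K := by
    intro s hs yy
    constructor
    · have := hwK s hs yy yy; have := norm_nonneg (deriv (w s) yy); linarith [hwK s hs yy yy]
    · have := hwK s hs yy yy; linarith [norm_nonneg (w s yy)]
  have hw'B : ∀ s ∈ Set.Icc (0:ℝ) T, ∀ yy, ‖w' s yy‖ ≤ K ∧ ‖deriv (w' s) yy‖ ≤ K := by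
    intro s hs yy
    exact ⟨by linarith [hw'K s hs yy yy, norm_nonneg (deriv (w' s) yy)],
      by linarith [hw'K s hs yy yy, norm_nonneg (w' s yy)]⟩
  have hUB : ∀ s ∈ Set.Icc (0:ℝ) T, ∀ yy, ‖U s yy‖ ≤ K ∧ ‖deriv (U s) yy‖ ≤ K := by
    intro s hs yy
    exact ⟨by linarith [hUK s hs yy yy, norm_nonneg (deriv (U s) yy)],
      by linarith [hUK s hs yy yy, norm_nonneg (U s yy)]⟩
  set BV : ℝ := Cg * (2 * K) + (Cf + (K + Hbar + K)) with hBVdef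
  have hVwB : ∀ s ∈ Set.Icc (0:ℝ) T, ∀ yy, ‖Vw s yy‖ ≤ BV := by
    intro s hs yy
    have h1 : ‖g (w s yy + H s yy + U s yy) (deriv (w s) yy + deriv (U s) yy)‖
        ≤ Cg * (2 * K) := by
      calc ‖g (w s yy + H s yy + U s yy) (deriv (w s) yy + deriv (U s) yy)‖
          ≤ ‖g (w s yy + H s yy + U s yy)‖ * ‖deriv (w s) yy + deriv (U s) yy‖ :=
            ContinuousLinearMap.le_opNorm _ _
        _ ≤ Cg * (2 * K) := by
            apply mul_le_mul (hCg _) ?_ (norm_nonneg _) hCg0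
            calc ‖deriv (w s) yy + deriv (U s) yy‖
                ≤ ‖deriv (w s) yy‖ + ‖deriv (U s) yy‖ := norm_add_le _ _
              _ ≤ 2 * K := by linarith [(hwB s hs yy).2, (hUB s hs yy).2]
    have h2 : ‖w s yy + H s yy + U s yy‖ ≤ K + Hbar + K := by
      calc ‖w s yy + H s yy + U s yy‖ ≤ ‖w s yy + H s yy‖ + ‖U s yy‖ := norm_add_le _ _
        _ ≤ (‖w s yy‖ + ‖H s yy‖) + ‖U s yy‖ := by linarith [norm_add_le (w s yy) (H s yy)]
        _ ≤ K + Hbar + K := by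
            linarith [(hwB s hs yy).1, hHbar s hs yy, (hUB s hs yy).1]
    calc ‖Vw s yy‖ ≤ ‖g (w s yy + H s yy + U s yy) (deriv (w s) yy + deriv (U s) yy)‖
          + ‖f (w s yy + H s yy + U s yy) + (w s yy + H s yy + U s yy)‖ := norm_add_le _ _
      _ ≤ Cg * (2 * K) + (Cf + (K + Hbar + K)) := by
          have := norm_add_le (f (w s yy + H s yy + U s yy)) (w s yy + H s yy + U s yy)
          have := hCf (w s yy + H s yy + U s yy)
          linarith
      _ = BV := hBVdef.symm
  have hVw'B : ∀ s ∈ Set.Icc (0:ℝ) T, ∀ yy, ‖Vw' s yy‖ ≤ BV := by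
    intro s hs yy
    have h1 : ‖g (w' s yy + H s yy + U s yy) (deriv (w' s) yy + deriv (U s) yy)‖
        ≤ Cg * (2 * K) := by
      calc ‖g (w' s yy + H s yy + U s yy) (deriv (w' s) yy + deriv (U s) yy)‖
          ≤ ‖g (w' s yy + H s yy + U s yy)‖ * ‖deriv (w' s) yy + deriv (U s) yy‖ :=
            ContinuousLinearMap.le_opNorm _ _
        _ ≤ Cg * (2 * K) := by
            apply mul_le_mul (hCg _) ?_ (norm_nonneg _) hCg0
            calc ‖deriv (w' s) yy + deriv (U s) yy‖
                ≤ ‖deriv (w' s) yy‖ + ‖deriv (U s) yy‖ := norm_add_le _ _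
              _ ≤ 2 * K := by linarith [(hw'B s hs yy).2, (hUB s hs yy).2]
    calc ‖Vw' s yy‖ ≤ ‖g (w' s yy + H s yy + U s yy) (deriv (w' s) yy + deriv (U s) yy)‖
          + ‖f (w' s yy + H s yy + U s yy) + (w' s yy + H s yy + U s yy)‖ := norm_add_le _ _
      _ ≤ Cg * (2 * K) + (Cf + (K + Hbar + K)) := by
          have h3 := norm_add_le (f (w' s yy + H s yy + U s yy)) (w' s yy + H s yy + U s yy)
          have h4 := hCf (w' s yy + H s yy + U s yy)
          have h5 : ‖w' s yy + H s yy + U s yy‖ ≤ K + Hbar + K := by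
            have h6 := norm_add_le (w' s yy + H s yy) (U s yy)
            have h7 := norm_add_le (w' s yy) (H s yy)
            linarith [(hw'B s hs yy).1, hHbar s hs yy, (hUB s hs yy).1]
          linarith
      _ = BV := hBVdef.symm

  -- Lipschitz estimates and the contraction bound on the integrand difference
  have hgl : ∀ a b : EuclideanSpace ℝ (Fin d), ‖g a - g b‖ ≤ Cg' * ‖a - b‖ := by
    intro a b
    exact Convex.norm_image_sub_le_of_norm_fderiv_le
      (fun v _ => (hgc.differentiable one_ne_zero).differentiableAt)
      (fun v _ => hCg' v) convex_univ (Set.mem_univ b) (Set.mem_univ a)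
  have hfl : ∀ a b : EuclideanSpace ℝ (Fin d), ‖f a - f b‖ ≤ Cf' * ‖a - b‖ := by
    intro a b
    exact Convex.norm_image_sub_le_of_norm_fderiv_le
      (fun v _ => (hfc.differentiable one_ne_zero).differentiableAt)
      (fun v _ => hCf' v) convex_univ (Set.mem_univ b) (Set.mem_univ a)
  have hδB : ∀ s ∈ Set.Icc (0:ℝ) T, ∀ yy, ‖Vw s yy - Vw' s yy‖ ≤ C₁ * D := by
    intro s hs yy
    set a := w s yy + H s yy + U s yy with hadef
    set a' := w' s yy + H s yy + U s yy with ha'def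
    set b := deriv (w s) yy + deriv (U s) yy with hbdef
    set b' := deriv (w' s) yy + deriv (U s) yy with hb'def
    have haa' : a - a' = w s yy - w' s yy := by rw [hadef, ha'def]; abel
    have hbb' : b - b' = deriv (w s) yy - deriv (w' s) yy := by rw [hbdef, hb'def]; abel
    have hDa : ‖a - a'‖ ≤ D := by
      rw [haa']
      linarith [hD s hs yy yy, norm_nonneg (deriv (w s) yy - deriv (w' s) yy)]
    have hDb : ‖b - b'‖ ≤ D := by
      rw [hbb']
      linarith [hD s hs yy yy, norm_nonneg (w s yy - w' s yy)]
    have hnb : ‖b‖ ≤ 2 * K := by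
      rw [hbdef]
      calc ‖deriv (w s) yy + deriv (U s) yy‖ ≤ ‖deriv (w s) yy‖ + ‖deriv (U s) yy‖ :=
            norm_add_le _ _
        _ ≤ 2 * K := by linarith [(hwB s hs yy).2, (hUB s hs yy).2]
    have hsplit : Vw s yy - Vw' s yy
        = (g a b - g a' b') + ((f a - f a') + (a - a')) := by
      simp only [hVwdef, hVw'def, ← hadef, ← ha'def, ← hbdef, ← hb'def]
      abel
    have hg1 : ‖g a b - g a' b'‖ ≤ Cg' * D * (2 * K) + Cg * D := by
      have e1 : g a b - g a' b' = (g a - g a') b + (g a') (b - b') := by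
        simp only [ContinuousLinearMap.sub_apply, map_sub]
        abel
      rw [e1]
      calc ‖(g a - g a') b + (g a') (b - b')‖
          ≤ ‖(g a - g a') b‖ + ‖(g a') (b - b')‖ := norm_add_le _ _
        _ ≤ ‖g a - g a'‖ * ‖b‖ + ‖g a'‖ * ‖b - b'‖ := by
            gcongr <;> exact ContinuousLinearMap.le_opNorm _ _
        _ ≤ (Cg' * D) * (2 * K) + Cg * D := by
            have h1 := mul_le_mul (hgl a a') hnb (norm_nonneg b)
              (mul_nonneg hCg'0 (norm_nonneg (a - a')))
            have h2 := mul_le_mul_of_nonneg_right (hCg a') (norm_nonneg (b - b'))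
            have h3 : Cg' * ‖a - a'‖ ≤ Cg' * D := mul_le_mul_of_nonneg_left hDa hCg'0
            have h4 := mul_le_mul_of_nonneg_right h3 (by linarith : (0:ℝ) ≤ 2 * K)
            have h5 := mul_le_mul_of_nonneg_left hDb hCg0
            linarith
        _ = Cg' * D * (2 * K) + Cg * D := by ring
    have hf1 : ‖f a - f a'‖ ≤ Cf' * D :=
      (hfl a a').trans (mul_le_mul_of_nonneg_left hDa hCf'0)
    calc ‖Vw s yy - Vw' s yy‖
        ≤ ‖g a b - g a' b'‖ + (‖f a - f a'‖ + ‖a - a'‖) := by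
          rw [hsplit]
          have n1 := norm_add_le (g a b - g a' b') ((f a - f a') + (a - a'))
          have n2 := norm_add_le (f a - f a') (a - a')
          linarith
      _ ≤ (Cg' * D * (2 * K) + Cg * D) + (Cf' * D + D) := by
          linarith [hg1, hf1, hDa]
      _ = C₁ * D := by rw [hC₁def]; ring

  have hδper : ∀ σ yy, Vw σ (yy + 2 * Real.pi) - Vw' σ (yy + 2 * Real.pi)
      = Vw σ yy - Vw' σ yy := by
    intro σ yy; rw [hVwper σ yy, hVw'per σ yy]
  have hC4 : 0 ≤ 4 * C₀ * C₁ := by positivity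
  -- trivial case t = 0
  rcases eq_or_lt_of_le ht.1 with h0 | ht0
  · have h0' : t = 0 := h0.symm
    subst h0'
    have hzero : ∀ z, driftMap g f H U w 0 z - driftMap g f H U w' 0 z = 0 := by
      intro z
      rw [hMw z, hMw' z, intervalIntegral.integral_same, intervalIntegral.integral_same, sub_zero]
    rw [hzero x, show (fun z => driftMap g f H U w 0 z - driftMap g f H U w' 0 z)
      = fun _ => (0 : EuclideanSpace ℝ (Fin d)) from funext hzero, deriv_const]
    simp only [norm_zero, add_zero]
    have : 0 ≤ Real.sqrt T := Real.sqrt_nonneg T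
    have h1 : (0:ℝ) ≤ 1 + Hbar := by linarith
    positivity
  -- main case 0 < t
  have htT : t ≤ T := ht.2
  have ht1 : t ≤ 1 := htT.trans hT1
  have hIoc : Set.uIoc (0:ℝ) t = Set.Ioc 0 t := Set.uIoc_of_le ht0.le
  have hne : ∀ᵐ s : ℝ ∂volume, s ≠ t := by
    rw [ae_iff]
    convert Real.volume_singleton (a := t) using 2
    ext s
    simp
  have hae1 : ∀ᵐ s ∂(volume.restrict (Set.uIoc (0:ℝ) t)), s ∈ Set.uIoc (0:ℝ) t :=
    ae_restrict_mem measurableSet_uIoc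
  have hae2 : ∀ᵐ s ∂(volume.restrict (Set.uIoc (0:ℝ) t)), s ≠ t := ae_restrict_of_ae hne
  -- pointwise heat semigroup estimate
  have hkey : ∀ s ∈ Set.Ioc (0:ℝ) t, s ≠ t → ∀ (V : ℝ → ℝ → EuclideanSpace ℝ (Fin d)) (BB : ℝ),
      (∀ σ, Continuous (V σ)) → (∀ σ yy, V σ (yy + 2 * Real.pi) = V σ yy) →
      (∀ σ ∈ Set.Icc (0:ℝ) T, ∀ yy, ‖V σ yy‖ ≤ BB) →
      ∀ z z', ‖heatSemigroup (t - s) (V s) z‖ + ‖deriv (heatSemigroup (t - s) (V s)) z'‖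
        ≤ C₀ * (t - s) ^ (-(1:ℝ)/2) * BB := by
    intro s hs hsne V BB hVc hVper hVB z z'
    have hr0 : 0 < t - s := sub_pos.2 (lt_of_le_of_ne hs.2 hsne)
    have hr1 : t - s ≤ 1 := by linarith [hs.1]
    exact hC₀ (t - s) ⟨hr0, hr1⟩ (V s) (hVc s) (fun yy => hVper s yy) BB
      (hVB s ⟨hs.1.le, hs.2.trans htT⟩) z z'
  -- integrability of the singular bound
  have hint_rpow : IntervalIntegrable (fun s => (t - s) ^ (-(1:ℝ)/2)) volume 0 t := by
    have h1 : IntervalIntegrable (fun u : ℝ => u ^ (-(1:ℝ)/2)) volume 0 t :=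
      intervalIntegral.intervalIntegrable_rpow' (by norm_num)
    have h2 := (h1.comp_sub_left t).symm
    simpa using h2
  have hbint : ∀ BB : ℝ,
      IntervalIntegrable (fun s => C₀ * (t - s) ^ (-(1:ℝ)/2) * BB) volume 0 t :=
    fun BB => (hint_rpow.const_mul C₀).mul_const BB
  -- integrability of the heat semigroup integrands
  have hSint : ∀ (V : ℝ → ℝ → EuclideanSpace ℝ (Fin d)) (BB : ℝ),
      (Continuous fun p : ℝ × ℝ => V p.1 p.2) →
      (∀ σ yy, V σ (yy + 2 * Real.pi) = V σ yy) →
      (∀ σ ∈ Set.Icc (0:ℝ) T, ∀ yy, ‖V σ yy‖ ≤ BB) →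
      ∀ z, IntervalIntegrable (fun s => heatSemigroup (t - s) (V s) z) volume 0 t := by
    intro V BB hVc hVper hVB z
    apply (hbint BB).mono_fun
      ((heatSemigroup_measurable t z V hVc).aestronglyMeasurable.restrict)
    filter_upwards [hae1, hae2] with s hs hsn
    rw [hIoc] at hs
    have hVs : ∀ σ, Continuous (V σ) := fun σ => hVc.comp (Continuous.prodMk_right σ)
    have h := hkey s hs hsn V BB hVs hVper hVB z z
    have h1 : ‖heatSemigroup (t - s) (V s) z‖ ≤ C₀ * (t - s) ^ (-(1:ℝ)/2) * BB := by
      linarith [norm_nonneg (deriv (heatSemigroup (t - s) (V s)) z)]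
    calc ‖heatSemigroup (t - s) (V s) z‖ ≤ C₀ * (t - s) ^ (-(1:ℝ)/2) * BB := h1
      _ ≤ ‖C₀ * (t - s) ^ (-(1:ℝ)/2) * BB‖ := le_abs_self _
  -- the difference of the drift maps as a single integral
  have hdiffeq : ∀ z, driftMap g f H U w t z - driftMap g f H U w' t z
      = ∫ s in (0:ℝ)..t, heatSemigroup (t - s) (fun yy => Vw s yy - Vw' s yy) z := by
    intro z
    rw [hMw z, hMw' z, ← intervalIntegral.integral_sub
      (hSint Vw BV hVwc hVwper hVwB z) (hSint Vw' BV hVw'c hVw'per hVw'B z)]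
    apply intervalIntegral.integral_congr_ae
    filter_upwards [hne] with s hsn hsmem
    rw [hIoc] at hsmem
    have hr0 : 0 < t - s := sub_pos.2 (lt_of_le_of_ne hsmem.2 hsn)
    exact heatSemigroup_sub hr0 _ _ (hVws s) (hVw's s) z
  -- value of the bound integral
  have hJ : (∫ s in (0:ℝ)..t, (t - s) ^ (-(1:ℝ)/2)) = 2 * Real.sqrt t := by
    rw [intervalIntegral.integral_comp_sub_left (fun u => u ^ (-(1:ℝ)/2)) t]
    simp only [sub_self, sub_zero]
    rw [integral_rpow (Or.inl (by norm_num))]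
    rw [show (-(1:ℝ)/2 + 1) = 1/2 by norm_num, Real.zero_rpow (by norm_num),
      Real.sqrt_eq_rpow]
    ring
  have hIbound : ∀ BB : ℝ, (∫ s in (0:ℝ)..t, C₀ * (t - s) ^ (-(1:ℝ)/2) * BB)
      = C₀ * BB * (2 * Real.sqrt t) := by
    intro BB
    rw [show (fun s => C₀ * (t - s) ^ (-(1:ℝ)/2) * BB)
      = fun s => (C₀ * BB) * ((t - s) ^ (-(1:ℝ)/2)) from funext fun s => by ring]
    rw [intervalIntegral.integral_const_mul, hJ]
  have habs : |(∫ s in (0:ℝ)..t, C₀ * (t - s) ^ (-(1:ℝ)/2) * (C₁ * D))|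
      = C₀ * (C₁ * D) * (2 * Real.sqrt t) := by
    rw [hIbound]
    exact abs_of_nonneg (by positivity)
  -- a.e. bounds for value and derivative
  have haeval : ∀ᵐ s ∂(volume.restrict (Set.uIoc (0:ℝ) t)),
      ‖heatSemigroup (t - s) (fun yy => Vw s yy - Vw' s yy) x‖
        ≤ C₀ * (t - s) ^ (-(1:ℝ)/2) * (C₁ * D) := by
    filter_upwards [hae1, hae2] with s hs hsn
    rw [hIoc] at hs
    have h := hkey s hs hsn _ (C₁ * D) hδs hδper hδB x x
    linarith [norm_nonneg (deriv (heatSemigroup (t - s) (fun yy => Vw s yy - Vw' s yy)) x)]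
  have hvalbound : ‖∫ s in (0:ℝ)..t,
      heatSemigroup (t - s) (fun yy => Vw s yy - Vw' s yy) x‖
        ≤ C₀ * (C₁ * D) * (2 * Real.sqrt t) := by
    have h := intervalIntegral.norm_integral_le_of_norm_le ht0.le
      (by rw [← hIoc]; exact (ae_restrict_iff' measurableSet_uIoc).1 haeval) (hbint (C₁ * D))
    rwa [hIbound] at h
  -- differentiation under the integral sign
  have hG := intervalIntegral.hasDerivAt_integral_of_dominated_loc_of_deriv_le
    (F := fun z s => heatSemigroup (t - s) (fun yy => Vw s yy - Vw' s yy) z)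
    (F' := fun z s => deriv (fun zz => heatSemigroup (t - s)
      (fun yy => Vw s yy - Vw' s yy) zz) z)
    (a := 0) (b := t) (μ := volume) (x₀ := y) (s := Metric.ball y 1)
    (bound := fun s => C₀ * (t - s) ^ (-(1:ℝ)/2) * (C₁ * D)) (Metric.ball_mem_nhds y one_pos)
    ?_ ?_ ?_ ?_ ?_ ?_
  rotate_left
  · filter_upwards with z
    exact (heatSemigroup_measurable t z _ hδc).aestronglyMeasurable.restrict
  · exact hSint _ (C₁ * D) hδc hδper hδB y
  · -- measurability of the derivative in s, via slopes
    apply aestronglyMeasurable_of_tendsto_ae (u := (Filter.atTop : Filter ℕ))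
      (f := fun (n : ℕ) s => (((n:ℝ)+1)) • (heatSemigroup (t - s)
        (fun yy => Vw s yy - Vw' s yy) (y + ((n:ℝ)+1)⁻¹)
        - heatSemigroup (t - s) (fun yy => Vw s yy - Vw' s yy) y))
    · intro n
      exact (((heatSemigroup_measurable t _ (fun s yy => Vw s yy - Vw' s yy) hδc).sub
        (heatSemigroup_measurable t _ (fun s yy => Vw s yy - Vw' s yy) hδc)).const_smul ((n:ℝ)+1)).aestronglyMeasurable.restrict
    · filter_upwards [hae1, hae2] with s hs hsn
      rw [hIoc] at hs
      have hr0 : 0 < t - s := sub_pos.2 (lt_of_le_of_ne hs.2 hsn)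
      have hder := heatSemigroup_hasDerivAt hr0 _ (hδs s) y
      rw [hder.deriv]
      have hseq : Filter.Tendsto (fun n : ℕ => y + ((n:ℝ)+1)⁻¹) Filter.atTop (nhdsWithin y {y}ᶜ) := by
        rw [tendsto_nhdsWithin_iff]
        constructor
        · have h1 : Filter.Tendsto (fun n : ℕ => ((n:ℝ)+1)⁻¹) Filter.atTop (nhds 0) :=
            tendsto_inv_atTop_zero.comp
              (Filter.tendsto_atTop_add_const_right _ 1 tendsto_natCast_atTop_atTop)
          have h2 := Filter.Tendsto.add (tendsto_const_nhds (x := y)) h1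
          simpa using h2
        · filter_upwards with n
          simp only [Set.mem_compl_iff, Set.mem_singleton_iff]
          have : (0:ℝ) < ((n:ℝ)+1)⁻¹ := by positivity
          intro hcon
          nlinarith [hcon]
      have hten := (hasDerivAt_iff_tendsto_slope.1 hder).comp hseq
      convert hten using 2 with n
      simp only [Function.comp_apply, slope_def_module, add_sub_cancel_left, inv_inv]
  · -- uniform bound on the derivative
    filter_upwards [hne] with s hsn hsmem z hz
    rw [hIoc] at hsmem
    have h := hkey s hsmem hsn _ (C₁ * D) hδs hδper hδB z z
    linarith [norm_nonneg (heatSemigroup (t - s) (fun yy => Vw s yy - Vw' s yy) z)]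
  · exact hbint (C₁ * D)
  · -- differentiability in the parameter
    filter_upwards [hne] with s hsn hsmem z hz
    rw [hIoc] at hsmem
    have hr0 : 0 < t - s := sub_pos.2 (lt_of_le_of_ne hsmem.2 hsn)
    have hder := heatSemigroup_hasDerivAt hr0 _ (hδs s) z
    rw [hder.deriv]
    exact hder
  -- bound for the derivative integral
  have haeder : ∀ᵐ s ∂(volume.restrict (Set.uIoc (0:ℝ) t)),
      ‖deriv (fun zz => heatSemigroup (t - s) (fun yy => Vw s yy - Vw' s yy) zz) y‖
        ≤ C₀ * (t - s) ^ (-(1:ℝ)/2) * (C₁ * D) := by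
    filter_upwards [hae1, hae2] with s hs hsn
    rw [hIoc] at hs
    have h := hkey s hs hsn _ (C₁ * D) hδs hδper hδB y y
    linarith [norm_nonneg (heatSemigroup (t - s) (fun yy => Vw s yy - Vw' s yy) y)]
  have hderbound : ‖∫ s in (0:ℝ)..t, deriv (fun zz => heatSemigroup (t - s)
      (fun yy => Vw s yy - Vw' s yy) zz) y‖ ≤ C₀ * (C₁ * D) * (2 * Real.sqrt t) := by
    have h := intervalIntegral.norm_integral_le_of_norm_le ht0.le
      (by rw [← hIoc]; exact (ae_restrict_iff' measurableSet_uIoc).1 haeder) (hbint (C₁ * D))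
    rwa [hIbound] at h
  -- assemble
  rw [hdiffeq x, show (fun z => driftMap g f H U w t z - driftMap g f H U w' t z)
    = fun z => ∫ s in (0:ℝ)..t, heatSemigroup (t - s) (fun yy => Vw s yy - Vw' s yy) z
    from funext hdiffeq, hG.2.deriv]
  have hsq : Real.sqrt t ≤ Real.sqrt T := Real.sqrt_le_sqrt htT
  have hsq0 : 0 ≤ Real.sqrt t := Real.sqrt_nonneg t
  have hsqT : 0 ≤ Real.sqrt T := Real.sqrt_nonneg T
  calc ‖∫ s in (0:ℝ)..t, heatSemigroup (t - s) (fun yy => Vw s yy - Vw' s yy) x‖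
        + ‖∫ s in (0:ℝ)..t, deriv (fun zz => heatSemigroup (t - s)
            (fun yy => Vw s yy - Vw' s yy) zz) y‖
      ≤ C₀ * (C₁ * D) * (2 * Real.sqrt t) + C₀ * (C₁ * D) * (2 * Real.sqrt t) :=
        add_le_add hvalbound hderbound
    _ = 4 * C₀ * C₁ * Real.sqrt t * D := by ring
    _ ≤ 4 * C₀ * C₁ * Real.sqrt T * D := by
        have := mul_le_mul_of_nonneg_left hsq hC4
        nlinarith
    _ ≤ 4 * C₀ * C₁ * (1 + Hbar) * Real.sqrt T * D := by
        nlinarith [mul_nonneg (mul_nonneg hC4 hsqT) hD0]
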